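/- Suppose the reduced scheme (Algorithm 3) holds with δγ − 1 ≥ 0, δβ_{k+1} ≤ δβ_k + α_kβ_k, β_k positive nondecreasing with β_k → ∞ and α_k > 0, and suppose (ε_k) is nonincreasing with ε_k ≥ 0 and Σ_{k=1}^{∞} α_kβ_kε_k < +∞. Let (x*,λ*) be a saddle point of L. Then the sequence (x_k, λ_k) is bounded and there exists C > 0 such that for all k ≥ 1: L(x_k, λ*) − L(x*, λ*) ≤ C/β_k, |f(x_k) − f(x*)| ≤ C/β_k, and ‖Ax_k − b‖ ≤ C/β_k. -/

import Mathlib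

open Filter Topology
open scoped RealInnerProductSpace

private lemma inner_self_sub_half {F : Type*} [NormedAddCommGroup F] [InnerProductSpace ℝ F]
    (v w : F) : ⟪v, v - w⟫ = ‖v‖^2/2 - ‖w‖^2/2 + ‖v - w‖^2/2 := by
  have h := norm_sub_sq_real v w
  have h2 : ⟪v, v - w⟫ = ‖v‖^2 - ⟪v, w⟫ := by
    rw [inner_sub_right, real_inner_self_eq_norm_sq]
  linarith

set_option maxHeartbeats 2000000 in
private lemma onestep
    {X Z : Type*}
    [NormedAddCommGroup X] [InnerProductSpace ℝ X] [CompleteSpace X]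
    [NormedAddCommGroup Z] [InnerProductSpace ℝ Z] [CompleteSpace Z]
    (f : X → ℝ) (A : X →L[ℝ] Z) (b : Z) (xs : X) (ls : Z)
    (μf δ γ a B B' e e' : ℝ)
    (hδ : 0 < δ) (ha : 0 < a) (hB : 0 < B) (hμf : 0 ≤ μf)
    (he' : 0 ≤ e') (hee : e' ≤ e) (hδγ : δ * γ - 1 ≥ 0)
    (hββ : δ * B' ≤ δ * B + a * B)
    (hAxs : A xs = b)
    (xk xk1 zk zk1 : X) (lk lk1 : Z) (u : X)
    (hz : zk1 = (1 / a) • (xk1 - xk) + γ • xk1)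
    (hl : lk1 = lk + (a * B) • (A (δ • zk1 + (1 - δ * γ) • xk1) - b))
    (hsub : ∀ w, f w - f xk1 ≥ ⟪u, w - xk1⟫)
    (hsc : ∀ p q' v : X, (∀ w, f w - f p ≥ ⟪v, w - p⟫) →
        f q' - f p - ⟪v, q' - p⟫ ≥ μf / 2 * ‖q' - p‖ ^ 2)
    (hst : (1 / a) • (zk1 - zk) =
        -(B • (u + (ContinuousLinearMap.adjoint A) lk1 + e • xk1
            - μf • (xk1 - (δ • zk1 + (1 - δ * γ) • xk1)))))
    (hDg1 : 0 ≤ f xk1 - f xs + ⟪ls, A xk1 - b⟫) :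
    δ^2 * B' * (f xk1 - f xs + ⟪ls, A xk1 - b⟫) + ‖δ • zk1 + (1 - δ * γ) • xk1 - xs‖^2 / 2
      + δ / 2 * ‖lk1 - ls‖^2 + (δ * γ - 1) / 2 * ‖xk1 - xs‖^2
      + δ^2 * (μf + e') * B' / 2 * ‖xk1 - xs‖^2
    ≤ δ^2 * B * (f xk - f xs + ⟪ls, A xk - b⟫) + ‖δ • zk + (1 - δ * γ) • xk - xs‖^2 / 2
      + δ / 2 * ‖lk - ls‖^2 + (δ * γ - 1) / 2 * ‖xk - xs‖^2
      + δ^2 * (μf + e) * B / 2 * ‖xk - xs‖^2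
      + δ * a * B * e * ‖xs‖ * ‖δ • zk1 + (1 - δ * γ) • xk1 - xs‖ := by
  have ha' : a ≠ 0 := ha.ne'
  have he0 : (0:ℝ) ≤ e := le_trans he' hee
  set q1 : X := δ • zk1 + (1 - δ * γ) • xk1 - xs with hq1def
  set q0 : X := δ • zk + (1 - δ * γ) • xk - xs with hq0def
  -- basic vector identities
  have hq1a : a • q1 = a • (xk1 - xs) + δ • (xk1 - xk) := by
    rw [hq1def, hz]; match_scalars <;> (field_simp; try ring)
  have hzz : zk1 - zk = -((a*B) • u) - (a*B) • ((ContinuousLinearMap.adjoint A) lk1)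
      - (a*B*e) • xk1 - (δ*B*μf) • (xk1 - xk) := by
    have hself : zk1 - zk = a • ((1/a) • (zk1 - zk)) := by
      rw [smul_smul]; field_simp; rw [one_smul]
    rw [hself, hst, hz]; match_scalars <;> (field_simp; try ring)
  have hqd : q1 - q0 = -((δ*a*B) • u) - (δ*a*B) • ((ContinuousLinearMap.adjoint A) lk1)
      - (δ*a*B*e) • xk1 - (δ^2*B*μf) • (xk1 - xk) + (1 - δ*γ) • (xk1 - xk) := by
    have h' : q1 - q0 = δ • (zk1 - zk) + (1 - δ*γ) • (xk1 - xk) := by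
      rw [hq1def, hq0def]; module
    rw [h', hzz]; match_scalars <;> ring
  have hV5 : lk1 - lk = (a*B) • (A q1) := by
    rw [hl, add_sub_cancel_left, hq1def, map_sub, hAxs]
  -- scalar identities / inequalities
  have N1 : ⟪q1, q1 - q0⟫ = ‖q1‖^2/2 - ‖q0‖^2/2 + ‖q1 - q0‖^2/2 := inner_self_sub_half q1 q0
  have H2 : ⟪q1, q1 - q0⟫ = -(δ*a*B)*⟪q1, u⟫ - (δ*a*B)*⟪A q1, lk1⟫ - (δ*a*B*e)*⟪q1, xk1⟫
      - (δ^2*B*μf)*⟪q1, xk1 - xk⟫ + (1-δ*γ)*⟪q1, xk1 - xk⟫ := by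
    rw [hqd]
    simp only [inner_add_right, inner_sub_right, inner_neg_right, real_inner_smul_right,
      ContinuousLinearMap.adjoint_inner_right]
    ring
  have H3 : a * ⟪q1, u⟫ = a * ⟪u, xk1 - xs⟫ + δ * ⟪u, xk1 - xk⟫ := by
    have h := congrArg (fun v : X => (⟪u, v⟫ : ℝ)) hq1a
    simp only [inner_add_right, real_inner_smul_right] at h
    have hc : (⟪u, q1⟫ : ℝ) = ⟪q1, u⟫ := real_inner_comm _ _
    rw [hc] at h
    exact h
  have H4 : ⟪u, xk1 - xs⟫ ≥ (f xk1 - f xs) + μf/2 * ‖xk1 - xs‖^2 := by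
    have h := hsc xk1 xs u hsub
    have h2 : (⟪u, xs - xk1⟫ : ℝ) = -⟪u, xk1 - xs⟫ := by
      rw [← inner_neg_right]; congr 1; abel
    have h3 : ‖xs - xk1‖ = ‖xk1 - xs‖ := norm_sub_rev _ _
    rw [h3, h2] at h; linarith
  have H5 : ⟪u, xk1 - xk⟫ ≥ (f xk1 - f xk) + μf/2 * ‖xk1 - xk‖^2 := by
    have h := hsc xk1 xk u hsub
    have h2 : (⟪u, xk - xk1⟫ : ℝ) = -⟪u, xk1 - xk⟫ := by
      rw [← inner_neg_right]; congr 1; abel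
    have h3 : ‖xk - xk1‖ = ‖xk1 - xk‖ := norm_sub_rev _ _
    rw [h3, h2] at h; linarith
  have H6 : (a*B) * ⟪A q1, lk1⟫ = ⟪lk1 - ls, lk1 - lk⟫ + ⟪ls, lk1 - lk⟫ := by
    calc (a*B) * ⟪A q1, lk1⟫ = ⟪(a*B) • (A q1), lk1⟫ := (real_inner_smul_left _ _ _).symm
      _ = ⟪lk1 - lk, lk1⟫ := by rw [← hV5]
      _ = ⟪lk1 - ls, lk1 - lk⟫ + ⟪ls, lk1 - lk⟫ := by
          have hflip : (⟪lk1 - lk, lk1⟫ : ℝ) = ⟪lk1, lk1 - lk⟫ := real_inner_comm _ _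
          rw [hflip, inner_sub_left]; ring
  have H7 : ⟪lk1 - ls, lk1 - lk⟫ ≥ ‖lk1 - ls‖^2/2 - ‖lk - ls‖^2/2 := by
    have h := inner_self_sub_half (lk1 - ls) (lk - ls)
    have h2 : (lk1 - ls) - (lk - ls) = lk1 - lk := by abel
    rw [h2] at h
    nlinarith [sq_nonneg ‖lk1 - lk‖]
  have H8 : a * ⟪ls, lk1 - lk⟫
      = a*B*(a * ⟪ls, A xk1 - b⟫ + δ * (⟪ls, A xk1 - b⟫ - ⟪ls, A xk - b⟫)) := by
    have hq1A : A (a • q1) = a • (A xk1 - b) + δ • ((A xk1 - b) - (A xk - b)) := by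
      rw [hq1a, map_add, map_smul, map_smul, map_sub, map_sub, hAxs]; abel
    calc a * ⟪ls, lk1 - lk⟫ = a * ((a*B) * ⟪ls, A q1⟫) := by
          rw [hV5, real_inner_smul_right]
      _ = (a*B) * ⟪ls, A (a • q1)⟫ := by rw [map_smul, real_inner_smul_right]; try ring
      _ = a*B*(a * ⟪ls, A xk1 - b⟫ + δ * (⟪ls, A xk1 - b⟫ - ⟪ls, A xk - b⟫)) := by
          rw [hq1A]
          simp only [inner_add_right, inner_sub_right, real_inner_smul_right]
          try ring
  have H10 : a * ⟪q1, xk1⟫ = a * ‖xk1 - xs‖^2 + δ * ⟪xk1 - xs, xk1 - xk⟫ + a * ⟪q1, xs⟫ := by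
    have h1 : (⟪q1, xk1⟫ : ℝ) = ⟪q1, xk1 - xs⟫ + ⟪q1, xs⟫ := by
      rw [← inner_add_right, sub_add_cancel]
    have h := congrArg (fun v : X => (⟪v, xk1 - xs⟫ : ℝ)) hq1a
    simp only [inner_add_left, real_inner_smul_left] at h
    rw [real_inner_self_eq_norm_sq] at h
    have hc : (⟪xk1 - xk, xk1 - xs⟫ : ℝ) = ⟪xk1 - xs, xk1 - xk⟫ := real_inner_comm _ _
    rw [hc] at h
    rw [h1]; linarith
  have H11 : (⟪q1, xs⟫ : ℝ) ≥ -(‖q1‖ * ‖xs‖) := by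
    have h := abs_real_inner_le_norm q1 xs
    have h2 := neg_abs_le (⟪q1, xs⟫ : ℝ)
    linarith
  have H12 : a * ⟪q1, xk1 - xk⟫ = a * ⟪xk1 - xs, xk1 - xk⟫ + δ * ‖xk1 - xk‖^2 := by
    have h := congrArg (fun v : X => (⟪v, xk1 - xk⟫ : ℝ)) hq1a
    simp only [inner_add_left, real_inner_smul_left] at h
    rw [real_inner_self_eq_norm_sq] at h
    exact h
  have H13 : (⟪xk1 - xs, xk1 - xk⟫ : ℝ) = ‖xk1 - xs‖^2/2 - ‖xk - xs‖^2/2 + ‖xk1 - xk‖^2/2 := by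
    have h := inner_self_sub_half (xk1 - xs) (xk - xs)
    have h2 : (xk1 - xs) - (xk - xs) = xk1 - xk := by abel
    rwa [h2] at h
  -- pre-scaled facts
  have PN1 : a*(‖q1‖^2/2 - ‖q0‖^2/2 + ‖q1 - q0‖^2/2) = a*⟪q1, q1 - q0⟫ := by rw [N1]
  have P2 : a * ⟪q1, q1 - q0⟫ = a * (-(δ*a*B)*⟪q1, u⟫ - (δ*a*B)*⟪A q1, lk1⟫
      - (δ*a*B*e)*⟪q1, xk1⟫ - (δ^2*B*μf)*⟪q1, xk1 - xk⟫ + (1-δ*γ)*⟪q1, xk1 - xk⟫) := by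
    rw [H2]
  have P3 : δ*a*B*(a * ⟪q1, u⟫) = δ*a*B*(a * ⟪u, xk1 - xs⟫ + δ * ⟪u, xk1 - xk⟫) := by rw [H3]
  have P4 : δ*a*a*B*((f xk1 - f xs) + μf/2 * ‖xk1 - xs‖^2) ≤ δ*a*a*B*⟪u, xk1 - xs⟫ :=
    mul_le_mul_of_nonneg_left H4 (by positivity)
  have P5 : δ*δ*a*B*((f xk1 - f xk) + μf/2 * ‖xk1 - xk‖^2) ≤ δ*δ*a*B*⟪u, xk1 - xk⟫ :=
    mul_le_mul_of_nonneg_left H5 (by positivity)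
  have P6 : δ*a*((a*B) * ⟪A q1, lk1⟫) = δ*a*(⟪lk1 - ls, lk1 - lk⟫ + ⟪ls, lk1 - lk⟫) := by rw [H6]
  have P7 : δ*a*(‖lk1 - ls‖^2/2 - ‖lk - ls‖^2/2) ≤ δ*a*⟪lk1 - ls, lk1 - lk⟫ :=
    mul_le_mul_of_nonneg_left H7 (by positivity)
  have P8 : δ*(a * ⟪ls, lk1 - lk⟫)
      = δ*(a*B*(a * ⟪ls, A xk1 - b⟫ + δ * (⟪ls, A xk1 - b⟫ - ⟪ls, A xk - b⟫))) := by rw [H8]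
  have P10 : δ*a*B*e*(a * ⟪q1, xk1⟫)
      = δ*a*B*e*(a * ‖xk1 - xs‖^2 + δ * ⟪xk1 - xs, xk1 - xk⟫ + a * ⟪q1, xs⟫) := by rw [H10]
  have P11 : δ*a*a*B*e*(-(‖q1‖ * ‖xs‖)) ≤ δ*a*a*B*e*⟪q1, xs⟫ :=
    mul_le_mul_of_nonneg_left H11 (by positivity)
  have P12a : δ*δ*B*μf*(a * ⟪q1, xk1 - xk⟫)
      = δ*δ*B*μf*(a * ⟪xk1 - xs, xk1 - xk⟫ + δ * ‖xk1 - xk‖^2) := by rw [H12]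
  have P12b : (1-δ*γ)*(a * ⟪q1, xk1 - xk⟫)
      = (1-δ*γ)*(a * ⟪xk1 - xs, xk1 - xk⟫ + δ * ‖xk1 - xk‖^2) := by rw [H12]
  have P13a : δ*δ*a*B*e*(⟪xk1 - xs, xk1 - xk⟫ : ℝ)
      = δ*δ*a*B*e*(‖xk1 - xs‖^2/2 - ‖xk - xs‖^2/2 + ‖xk1 - xk‖^2/2) := by rw [H13]
  have P13b : δ*δ*a*B*μf*(⟪xk1 - xs, xk1 - xk⟫ : ℝ)
      = δ*δ*a*B*μf*(‖xk1 - xs‖^2/2 - ‖xk - xs‖^2/2 + ‖xk1 - xk‖^2/2) := by rw [H13]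
  have P13c : (1-δ*γ)*a*(⟪xk1 - xs, xk1 - xk⟫ : ℝ)
      = (1-δ*γ)*a*(‖xk1 - xs‖^2/2 - ‖xk - xs‖^2/2 + ‖xk1 - xk‖^2/2) := by rw [H13]
  -- sign facts
  have hslack : (0:ℝ) ≤ (δ*B + a*B) - δ*B' := by linarith
  have S1 : 0 ≤ (a*δ*((δ*B + a*B) - δ*B')) * (f xk1 - f xs + ⟪ls, A xk1 - b⟫) :=
    mul_nonneg (by positivity) hDg1
  have Sh1 : 0 ≤ (a*δ*(μf+e')*((δ*B + a*B) - δ*B')) * (‖xk1 - xs‖^2/2) :=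
    mul_nonneg (by positivity) (by positivity)
  have Sh2 : 0 ≤ (a*(e-e')*(δ*δ*B + δ*a*B)) * (‖xk1 - xs‖^2/2) := by
    have : (0:ℝ) ≤ e - e' := by linarith
    positivity
  have Sh3 : 0 ≤ δ*a*a*B*e*(‖xk1 - xs‖^2/2) := by positivity
  have Sd1 : 0 ≤ δ*δ*a*B*μf*(‖xk1 - xk‖^2/2) := by positivity
  have Sd2 : 0 ≤ δ*δ*δ*B*μf*‖xk1 - xk‖^2 := by positivity
  have Sd3 : 0 ≤ (δ*γ-1)*δ*‖xk1 - xk‖^2 := by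
    have : (0:ℝ) ≤ δ*γ-1 := hδγ
    positivity
  have Sd4 : 0 ≤ δ*δ*a*B*e*(‖xk1 - xk‖^2/2) := by positivity
  have Sd6 : 0 ≤ (δ*γ-1)*a*(‖xk1 - xk‖^2/2) := by
    have : (0:ℝ) ≤ δ*γ-1 := hδγ
    positivity
  have SQD : 0 ≤ a*(‖q1 - q0‖^2/2) := by positivity
  -- master, multiplied by a
  have master : a * (δ^2 * B' * (f xk1 - f xs + ⟪ls, A xk1 - b⟫) + ‖q1‖^2 / 2
      + δ / 2 * ‖lk1 - ls‖^2 + (δ * γ - 1) / 2 * ‖xk1 - xs‖^2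
      + δ^2 * (μf + e') * B' / 2 * ‖xk1 - xs‖^2)
      ≤ a * (δ^2 * B * (f xk - f xs + ⟪ls, A xk - b⟫) + ‖q0‖^2 / 2
      + δ / 2 * ‖lk - ls‖^2 + (δ * γ - 1) / 2 * ‖xk - xs‖^2
      + δ^2 * (μf + e) * B / 2 * ‖xk - xs‖^2
      + δ * a * B * e * ‖xs‖ * ‖q1‖) := by
    linarith [PN1, P2, P3, P4, P5, P6, P7, P8, P10, P11, P12a, P12b, P13a, P13b, P13c,
      S1, Sh1, Sh2, Sh3, Sd1, Sd2, Sd3, Sd4, Sd6, SQD]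
  exact le_of_mul_le_mul_left master ha


private lemma aux_sq  {s t c : ℝ} (hs : 0 ≤ s) (ht : 0 ≤ t) (hc : 0 ≤ c)
    (h : s^2 ≤ t^2 + c*s) : s ≤ t + c := by
  nlinarith [sq_nonneg (s - t - c), sq_nonneg (s + t), mul_nonneg ht hc, mul_nonneg hs hc]


section MainProof

set_option maxHeartbeats 2000000 in
theorem convergence_rates_reduced_algorithm
    {X Z : Type*}
    [NormedAddCommGroup X] [InnerProductSpace ℝ X] [CompleteSpace X]
    [NormedAddCommGroup Z] [InnerProductSpace ℝ Z] [CompleteSpace Z]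
    (f : X → ℝ)
    (hfconv : ConvexOn ℝ Set.univ f) (hfcont : Continuous f)
    (A : X →L[ℝ] Z) (b : Z)
    (μf : ℝ) (hμf : 0 ≤ μf)
    (hfS : ∀ x u v : X, (∀ w, f w - f x ≥ ⟪v, w - x⟫) →
        f u - f x - ⟪v, u - x⟫ ≥ μf / 2 * ‖u - x‖ ^ 2)
    (L : X → Z → ℝ)
    (hL : ∀ x l, L x l = f x + ⟪l, A x - b⟫)
    (δ γ : ℝ) (hδ : 0 < δ) (hγ : 0 < γ)
    (α β ε : ℕ → ℝ)
    (hα : ∀ k, 1 ≤ k → 0 < α k)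
    (hβpos : ∀ k, 1 ≤ k → 0 < β k)
    (hβmono : ∀ k, 1 ≤ k → β k ≤ β (k + 1))
    (hεnn : ∀ k, 1 ≤ k → 0 ≤ ε k)
    (hβtop : Tendsto β atTop atTop)
    (x : ℕ → X) (lam : ℕ → Z) (Zs Zd : ℕ → X)
    (hZ : ∀ k, 1 ≤ k → Zs (k + 1) = (1 / α k) • (x (k + 1) - x k) + γ • x (k + 1))
    (hZd : ∀ k, 1 ≤ k → Zd (k + 1) = δ • Zs (k + 1) + (1 - δ * γ) • x (k + 1))
    (hlam : ∀ k, 1 ≤ k → lam (k + 1) = lam k + (α k * β k) • (A (Zd (k + 1)) - b))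
    (hstep : ∀ k, 1 ≤ k → ∃ u,
        (∀ w, f w - f (x (k + 1)) ≥ ⟪u, w - x (k + 1)⟫) ∧
        (1 / α k) • (Zs (k + 1) - Zs k) =
          -(β k • (u + (ContinuousLinearMap.adjoint A) (lam (k + 1)) + ε k • x (k + 1)
              - μf • (x (k + 1) - Zd (k + 1)))))
    (hδγ : δ * γ - 1 ≥ 0)
    (hββ : ∀ k, 1 ≤ k → δ * β (k + 1) ≤ δ * β k + α k * β k)
    (hεmono : ∀ k, 1 ≤ k → ε (k + 1) ≤ ε k)
    (hsum : Summable (fun k => α k * β k * ε k))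
    (xs : X) (ls : Z)
    (hsaddle : ∀ x' l', L xs l' ≤ L xs ls ∧ L xs ls ≤ L x' ls)
    :
    (∃ M : ℝ, ∀ k, 1 ≤ k → ‖x k‖ ≤ M ∧ ‖lam k‖ ≤ M) ∧
    ∃ C : ℝ, 0 < C ∧ ∀ k, 1 ≤ k →
      L (x k) ls - L xs ls ≤ C / β k ∧
      |f (x k) - f xs| ≤ C / β k ∧
      ‖A (x k) - b‖ ≤ C / β k := by
  have hβ1 := hβpos 1 le_rfl
  -- feasibility of the saddle point
  have hAxs : A xs = b := by
    have h := (hsaddle xs (ls + (A xs - b))).1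
    rw [hL, hL, inner_add_left] at h
    have h2 : (⟪A xs - b, A xs - b⟫ : ℝ) ≤ 0 := by linarith
    have h3 : A xs - b = 0 := by
      have h4 : (⟪A xs - b, A xs - b⟫ : ℝ) = 0 :=
        le_antisymm h2 real_inner_self_nonneg
      exact inner_self_eq_zero.mp h4
    rwa [sub_eq_zero] at h3
  have hLxs : L xs ls = f xs := by rw [hL, hAxs, sub_self, inner_zero_right, add_zero]
  have hDnn : ∀ w : X, 0 ≤ f w - f xs + ⟪ls, A w - b⟫ := by
    intro w
    have h := (hsaddle w ls).2
    rw [hLxs, hL] at h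
    linarith
  choose u hu_sub hu_st using hstep
  set q : ℕ → X := fun k => δ • Zs k + (1 - δ * γ) • x k - xs with hqdef
  set En : ℕ → ℝ := fun k => δ^2 * β k * (f (x k) - f xs + ⟪ls, A (x k) - b⟫)
      + ‖q k‖^2 / 2 + δ / 2 * ‖lam k - ls‖^2
      + (δ * γ - 1) / 2 * ‖x k - xs‖^2
      + δ^2 * (μf + ε k) * β k / 2 * ‖x k - xs‖^2 with hEndef
  clear_value En
  have hstepE : ∀ k, 1 ≤ k → En (k+1) ≤ En k + δ * α k * β k * ε k * ‖xs‖ * ‖q (k+1)‖ := by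
    intro k hk
    have h3 := hlam k hk
    have h5 := hu_st k hk
    rw [hZd k hk] at h3 h5
    simp only [hEndef, hqdef]
    exact onestep f A b xs ls μf δ γ (α k) (β k) (β (k+1)) (ε k) (ε (k+1)) hδ (hα k hk)
      (hβpos k hk) hμf (hεnn (k+1) (by omega)) (hεmono k hk) hδγ (hββ k hk) hAxs
      (x k) (x (k+1)) (Zs k) (Zs (k+1)) (lam k) (lam (k+1)) (u k hk)
      (hZ k hk) h3 (hu_sub k hk) hfS h5 (hDnn (x (k+1)))
  -- componentwise nonnegativity / extraction
  have hterms : ∀ k, 1 ≤ k →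
      δ^2 * β k * (f (x k) - f xs + ⟪ls, A (x k) - b⟫) ≤ En k ∧
      ‖q k‖^2/2 ≤ En k ∧ δ/2*‖lam k - ls‖^2 ≤ En k ∧ 0 ≤ En k := by
    intro k hk
    have h1 := hDnn (x k)
    have h2 := hβpos k hk
    have h3 := hεnn k hk
    have e1 : 0 ≤ δ^2 * β k * (f (x k) - f xs + ⟪ls, A (x k) - b⟫) :=
      mul_nonneg (mul_nonneg (sq_nonneg δ) h2.le) h1
    have e2 : 0 ≤ ‖q k‖^2/2 := by positivity
    have e3 : 0 ≤ δ/2*‖lam k - ls‖^2 := by positivity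
    have e4 : 0 ≤ (δ * γ - 1)/2*‖x k - xs‖^2 :=
      mul_nonneg (by linarith) (sq_nonneg _)
    have e5 : 0 ≤ δ^2*(μf + ε k)*β k/2*‖x k - xs‖^2 := by
      have h6 : (0:ℝ) ≤ μf + ε k := by linarith
      have h7 := mul_nonneg (mul_nonneg (mul_nonneg (sq_nonneg δ) h6) h2.le)
        (sq_nonneg ‖x k - xs‖)
      nlinarith [h7]
    refine ⟨?_, ?_, ?_, ?_⟩ <;> simp only [hEndef] <;> linarith
  -- sqrt energy sequence
  set s : ℕ → ℝ := fun k => Real.sqrt (En k) with hsdef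
  have hs_eval : ∀ k, s k = Real.sqrt (En k) := fun k => by rw [hsdef]
  clear_value s
  have hs_nonneg : ∀ k, 0 ≤ s k := fun k => by rw [hs_eval]; exact Real.sqrt_nonneg _
  have hs_sq : ∀ k, 1 ≤ k → s k ^ 2 = En k := fun k hk => by
    rw [hs_eval]; exact Real.sq_sqrt (hterms k hk).2.2.2
  have hq_le : ∀ k, 1 ≤ k → ‖q k‖ ≤ Real.sqrt 2 * s k := by
    intro k hk
    have h1 : ‖q k‖^2 ≤ 2 * En k := by linarith [(hterms k hk).2.1]
    calc ‖q k‖ = Real.sqrt (‖q k‖^2) := (Real.sqrt_sq (norm_nonneg _)).symm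
      _ ≤ Real.sqrt (2 * En k) := Real.sqrt_le_sqrt h1
      _ = Real.sqrt 2 * s k := by rw [hs_eval, Real.sqrt_mul (by norm_num)]
  have hstep2 : ∀ k, 1 ≤ k → s (k+1) ≤ s k + Real.sqrt 2 * (δ * α k * β k * ε k * ‖xs‖) := by
    intro k hk
    have h1 := hstepE k hk
    have h2 := hq_le (k+1) (by omega)
    have hc : 0 ≤ δ * α k * β k * ε k * ‖xs‖ := by
      have := hα k hk; have := hβpos k hk; have := hεnn k hk; positivity
    have h4 := mul_le_mul_of_nonneg_left h2 hc
    have h3 : s (k+1)^2 ≤ s k^2 + (Real.sqrt 2 * (δ * α k * β k * ε k * ‖xs‖)) * s (k+1) := by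
      rw [hs_sq (k+1) (by omega), hs_sq k hk]
      nlinarith [h1, h4]
    exact aux_sq (hs_nonneg _) (hs_nonneg _) (mul_nonneg (Real.sqrt_nonneg 2) hc) h3
  -- summability bound
  set G : ℕ → ℝ := fun n => α (n+1) * β (n+1) * ε (n+1) with hGdef
  have hGsum : Summable G := by
    have h := (summable_nat_add_iff 1).mpr hsum
    simpa [hGdef] using h
  have hGnn : ∀ n, 0 ≤ G n := by
    intro n
    have h1 := hα (n+1) (by omega)
    have h2 := hβpos (n+1) (by omega)
    have h3 := hεnn (n+1) (by omega)
    simp only [hGdef]; positivity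
  set T : ℝ := ∑' n, G n with hTdef
  clear_value T
  have hTnn : 0 ≤ T := by rw [hTdef]; exact tsum_nonneg hGnn
  have hpartial : ∀ n, ∑ j ∈ Finset.range n, G j ≤ T := by
    intro n; rw [hTdef]; exact Summable.sum_le_tsum _ (fun i _ => hGnn i) hGsum
  set S : ℝ := s 1 + Real.sqrt 2 * δ * ‖xs‖ * T with hSdef
  clear_value S
  have hSnn : 0 ≤ S := by
    have h1 : 0 ≤ Real.sqrt 2 * δ * ‖xs‖ * T :=
      mul_nonneg (by positivity) hTnn
    have := hs_nonneg 1
    rw [hSdef]; linarith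
  have hsb : ∀ n : ℕ, s (n+1) ≤ s 1 + Real.sqrt 2 * δ * ‖xs‖ * (∑ j ∈ Finset.range n, G j) := by
    intro n
    induction n with
    | zero => simp
    | succ n ih =>
      have h1 := hstep2 (n+1) (by omega)
      rw [Finset.sum_range_succ]
      have harr : Real.sqrt 2 * (δ * α (n+1) * β (n+1) * ε (n+1) * ‖xs‖)
          = Real.sqrt 2 * δ * ‖xs‖ * G n := by simp only [hGdef]; ring
      linarith [h1, ih]
  have hsS : ∀ k, 1 ≤ k → s k ≤ S := by
    intro k hk
    obtain ⟨n, rfl⟩ : ∃ n, k = n + 1 := ⟨k - 1, by omega⟩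
    have h1 := hsb n
    have h2 : Real.sqrt 2 * δ * ‖xs‖ * (∑ j ∈ Finset.range n, G j)
        ≤ Real.sqrt 2 * δ * ‖xs‖ * T :=
      mul_le_mul_of_nonneg_left (hpartial n) (by positivity)
    rw [hSdef]; linarith
  have hEnS : ∀ k, 1 ≤ k → En k ≤ S^2 := by
    intro k hk
    rw [← hs_sq k hk]
    exact pow_le_pow_left₀ (hs_nonneg k) (hsS k hk) 2
  -- bounds on lam, q, x
  set ΛM : ℝ := Real.sqrt (2 * S^2 / δ) + ‖ls‖ with hΛdef
  clear_value ΛM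
  have hlamb : ∀ k, 1 ≤ k → ‖lam k‖ ≤ ΛM := by
    intro k hk
    have h1 := ((hterms k hk).2.2.1).trans (hEnS k hk)
    have h2 : ‖lam k - ls‖^2 ≤ 2*S^2/δ := by
      rw [le_div_iff₀ hδ]; linarith
    have h3 : ‖lam k - ls‖ ≤ Real.sqrt (2*S^2/δ) := by
      calc ‖lam k - ls‖ = Real.sqrt (‖lam k - ls‖^2) := (Real.sqrt_sq (norm_nonneg _)).symm
        _ ≤ _ := Real.sqrt_le_sqrt h2
    calc ‖lam k‖ = ‖(lam k - ls) + ls‖ := by rw [sub_add_cancel]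
      _ ≤ ‖lam k - ls‖ + ‖ls‖ := norm_add_le _ _
      _ ≤ ΛM := by rw [hΛdef]; linarith
  have hΛnn : 0 ≤ ΛM := le_trans (norm_nonneg (lam 1)) (hlamb 1 le_rfl)
  have hqb : ∀ k, 1 ≤ k → ‖q k‖ ≤ Real.sqrt 2 * S := by
    intro k hk
    calc ‖q k‖ ≤ Real.sqrt 2 * s k := hq_le k hk
      _ ≤ Real.sqrt 2 * S := mul_le_mul_of_nonneg_left (hsS k hk) (Real.sqrt_nonneg 2)
  have hq1a : ∀ k, 1 ≤ k →
      (α k + δ) • (x (k+1) - xs) = (α k) • (q (k+1)) + δ • (x k - xs) := by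
    intro k hk
    have ha' := (hα k hk).ne'
    simp only [hqdef]
    rw [hZ k hk]; match_scalars <;> (field_simp; try ring)
  set XB : ℝ := max (Real.sqrt 2 * S) ‖x 1 - xs‖ with hXBdef
  clear_value XB
  have hxb' : ∀ n : ℕ, ‖x (n+1) - xs‖ ≤ XB := by
    intro n
    induction n with
    | zero => rw [hXBdef]; exact le_max_right _ _
    | succ n ih =>
      have hn1 : 1 ≤ n + 1 := by omega
      have h1 := hq1a (n+1) hn1
      have h2 : ‖(α (n+1) + δ) • (x (n+2) - xs)‖
          ≤ α (n+1) * ‖q (n+2)‖ + δ * ‖x (n+1) - xs‖ := by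
        rw [h1]
        refine (norm_add_le _ _).trans ?_
        rw [norm_smul, norm_smul, Real.norm_eq_abs, Real.norm_eq_abs,
          abs_of_pos (hα (n+1) hn1), abs_of_pos hδ]
      rw [norm_smul, Real.norm_eq_abs, abs_of_pos (add_pos (hα (n+1) hn1) hδ)] at h2
      have h3 : ‖q (n+2)‖ ≤ XB := (hqb (n+2) (by omega)).trans (by rw [hXBdef]; exact le_max_left _ _)
      have h4 : (α (n+1) + δ) * ‖x (n+2) - xs‖ ≤ (α (n+1) + δ) * XB := by
        nlinarith [hα (n+1) hn1, hδ]
      exact le_of_mul_le_mul_left h4 (add_pos (hα (n+1) hn1) hδ)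
  have hxb : ∀ k, 1 ≤ k → ‖x k - xs‖ ≤ XB := by
    intro k hk
    obtain ⟨n, rfl⟩ : ∃ n, k = n + 1 := ⟨k - 1, by omega⟩
    exact hxb' n
  -- feasibility estimates
  have hV5' : ∀ k, 1 ≤ k → lam (k+1) - lam k = (α k * β k) • (A (q (k+1))) := by
    intro k hk
    rw [hlam k hk, add_sub_cancel_left]
    congr 1
    rw [hZd k hk]
    simp only [hqdef]
    rw [map_sub, hAxs]
  have hrec : ∀ k, 1 ≤ k →
      ((α k + δ) * β k) • (A (x (k+1)) - b)
        = (δ * β k) • (A (x k) - b) + (lam (k+1) - lam k) := by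
    intro k hk
    have h2 : (α k + δ) • (A (x (k+1)) - b) = (α k) • (A (q (k+1))) + δ • (A (x k) - b) := by
      calc (α k + δ) • (A (x (k+1)) - b) = A ((α k + δ) • (x (k+1) - xs)) := by
            rw [map_smul, map_sub, hAxs]
        _ = A ((α k) • (q (k+1)) + δ • (x k - xs)) := by rw [hq1a k hk]
        _ = (α k) • (A (q (k+1))) + δ • (A (x k) - b) := by
            rw [map_add, map_smul, map_smul,
              show A (x k - xs) = A (x k) - b by rw [map_sub, hAxs]]
    have h3 : (β k) • ((α k + δ) • (A (x (k+1)) - b))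
        = (β k) • ((α k) • (A (q (k+1))) + δ • (A (x k) - b)) := by rw [h2]
    have h4 : ((α k + δ) * β k) • (A (x (k+1)) - b)
        = (β k) • ((α k + δ) • (A (x (k+1)) - b)) := by rw [smul_smul, mul_comm]
    rw [hV5' k hk, h4, h3]
    module
  set KK : ℝ := ΛM + ‖((α 1 + δ) * β 1) • (A (x 2) - b) - lam 2‖ with hKKdef
  clear_value KK
  have hΛKK : ΛM ≤ KK := by rw [hKKdef]; linarith [norm_nonneg (((α 1 + δ) * β 1) • (A (x 2) - b) - lam 2)]
  have hG1 : ∀ n : ℕ, ‖((α (n+1) + δ) * β (n+1)) • (A (x (n+2)) - b) - lam (n+2)‖ ≤ KK := by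
    intro n
    induction n with
    | zero => rw [hKKdef]; linarith [hΛnn]
    | succ n ih =>
      have hn1 : 1 ≤ n + 1 := by omega
      have hid : ((α (n+2) + δ) * β (n+2)) • (A (x (n+3)) - b) - lam (n+3)
          = (δ * β (n+2)) • (A (x (n+2)) - b) - lam (n+2) := by
        rw [hrec (n+2) (by omega)]; abel
      rw [hid]
      have hW : (0:ℝ) < (α (n+1) + δ) * β (n+1) := by
        have := hα (n+1) hn1; have := hβpos (n+1) hn1; positivity
      have hc0 : (0:ℝ) ≤ δ * β (n+2) := by
        have := hβpos (n+2) (by omega); positivity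
      have hcW : δ * β (n+2) ≤ (α (n+1) + δ) * β (n+1) := by
        have := hββ (n+1) hn1; nlinarith
      have hid2 : (δ * β (n+2)) • (A (x (n+2)) - b) - lam (n+2)
          = ((δ * β (n+2)) / ((α (n+1) + δ) * β (n+1)))
              • (((α (n+1) + δ) * β (n+1)) • (A (x (n+2)) - b) - lam (n+2))
            + (((δ * β (n+2)) - ((α (n+1) + δ) * β (n+1))) / ((α (n+1) + δ) * β (n+1)))
              • lam (n+2) := by
        have hW0 : ((α (n+1) + δ) * β (n+1)) ≠ 0 := hW.ne'
        rw [smul_sub (δ * β (n+2) / ((α (n+1) + δ) * β (n+1))), smul_smul, div_mul_cancel₀ _ hW0, sub_div,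
          div_self hW0, sub_smul, one_smul]; module
      rw [hid2]
      have t1 := norm_add_le
        (((δ * β (n+2)) / ((α (n+1) + δ) * β (n+1)))
          • (((α (n+1) + δ) * β (n+1)) • (A (x (n+2)) - b) - lam (n+2)))
        ((((δ * β (n+2)) - ((α (n+1) + δ) * β (n+1))) / ((α (n+1) + δ) * β (n+1)))
          • lam (n+2))
      rw [norm_smul, norm_smul, Real.norm_eq_abs, Real.norm_eq_abs] at t1
      have habs1 : |(δ * β (n+2)) / ((α (n+1) + δ) * β (n+1))|
          = (δ * β (n+2)) / ((α (n+1) + δ) * β (n+1)) :=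
        abs_of_nonneg (div_nonneg hc0 hW.le)
      have habs2 : |((δ * β (n+2)) - ((α (n+1) + δ) * β (n+1))) / ((α (n+1) + δ) * β (n+1))|
          = (((α (n+1) + δ) * β (n+1)) - (δ * β (n+2))) / ((α (n+1) + δ) * β (n+1)) := by
        rw [abs_div, abs_of_pos hW, abs_of_nonpos (by linarith), neg_sub]
      rw [habs1, habs2] at t1
      have t2 : (δ * β (n+2)) / ((α (n+1) + δ) * β (n+1))
            * ‖((α (n+1) + δ) * β (n+1)) • (A (x (n+2)) - b) - lam (n+2)‖
          ≤ (δ * β (n+2)) / ((α (n+1) + δ) * β (n+1)) * KK :=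
        mul_le_mul_of_nonneg_left ih (div_nonneg hc0 hW.le)
      have t3 : (((α (n+1) + δ) * β (n+1)) - (δ * β (n+2))) / ((α (n+1) + δ) * β (n+1))
            * ‖lam (n+2)‖
          ≤ (((α (n+1) + δ) * β (n+1)) - (δ * β (n+2))) / ((α (n+1) + δ) * β (n+1)) * ΛM :=
        mul_le_mul_of_nonneg_left (hlamb (n+2) (by omega))
          (div_nonneg (by linarith) hW.le)
      have hsum1 : (δ * β (n+2)) / ((α (n+1) + δ) * β (n+1))
          + (((α (n+1) + δ) * β (n+1)) - (δ * β (n+2))) / ((α (n+1) + δ) * β (n+1)) = 1 := by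
        rw [← add_div, add_sub_cancel, div_self hW.ne']
      have t4 : (δ * β (n+2)) / ((α (n+1) + δ) * β (n+1)) * KK
          + (((α (n+1) + δ) * β (n+1)) - (δ * β (n+2))) / ((α (n+1) + δ) * β (n+1)) * ΛM
          ≤ KK := by
        nlinarith [mul_nonneg (div_nonneg (sub_nonneg.2 hcW) hW.le) (sub_nonneg.2 hΛKK)]
      linarith [t1, t2, t3, t4]
  have hfeas2 : ∀ n : ℕ, ‖A (x (n+2)) - b‖ ≤ (KK + ΛM) / (δ * β (n+2)) := by
    intro n
    have hn1 : 1 ≤ n + 1 := by omega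
    have h1 := hG1 n
    have hW : (0:ℝ) < (α (n+1) + δ) * β (n+1) := by
      have := hα (n+1) hn1; have := hβpos (n+1) hn1; positivity
    have h3 : ‖((α (n+1) + δ) * β (n+1)) • (A (x (n+2)) - b)‖ ≤ KK + ΛM := by
      calc ‖((α (n+1) + δ) * β (n+1)) • (A (x (n+2)) - b)‖
          = ‖(((α (n+1) + δ) * β (n+1)) • (A (x (n+2)) - b) - lam (n+2)) + lam (n+2)‖ := by
            rw [sub_add_cancel]
        _ ≤ ‖((α (n+1) + δ) * β (n+1)) • (A (x (n+2)) - b) - lam (n+2)‖ + ‖lam (n+2)‖ :=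
            norm_add_le _ _
        _ ≤ KK + ΛM := add_le_add h1 (hlamb (n+2) (by omega))
    rw [norm_smul, Real.norm_eq_abs, abs_of_pos hW] at h3
    have hδβ : (0:ℝ) < δ * β (n+2) := by
      have := hβpos (n+2) (by omega); positivity
    rw [le_div_iff₀ hδβ]
    have hcW : δ * β (n+2) ≤ (α (n+1) + δ) * β (n+1) := by
      have := hββ (n+1) hn1; nlinarith
    nlinarith [norm_nonneg (A (x (n+2)) - b),
      mul_nonneg (norm_nonneg (A (x (n+2)) - b)) (sub_nonneg.2 hcW)]
  set CF : ℝ := max ((KK + ΛM)/δ) (β 1 * ‖A (x 1) - b‖) with hCFdef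
  clear_value CF
  have hKKnn : 0 ≤ KK := le_trans hΛnn hΛKK
  have hCFnn : 0 ≤ CF := le_trans (div_nonneg (by linarith : (0:ℝ) ≤ KK + ΛM) hδ.le)
    (by rw [hCFdef]; exact le_max_left ((KK + ΛM)/δ) _)
  have hfeas : ∀ k, 1 ≤ k → ‖A (x k) - b‖ ≤ CF / β k := by
    intro k hk
    match k, hk with
    | 1, _ =>
      rw [le_div_iff₀ hβ1]
      have h1 : β 1 * ‖A (x 1) - b‖ ≤ CF := by rw [hCFdef]; exact le_max_right _ _
      linarith
    | (n+2), _ =>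
      have h1 := hfeas2 n
      have h4 : (KK + ΛM)/(δ * β (n+2)) = ((KK + ΛM)/δ)/(β (n+2)) := by rw [div_div]
      have h5 : ((KK + ΛM)/δ) ≤ CF := by rw [hCFdef]; exact le_max_left _ _
      have h6 : ((KK + ΛM)/δ)/(β (n+2)) ≤ CF/β (n+2) :=
        (div_le_div_iff_of_pos_right (hβpos (n+2) (by omega))).mpr h5
      linarith [h1, h4 ▸ h1]
  -- primal gap estimate
  set C1 : ℝ := S^2/δ^2 with hC1def
  clear_value C1
  have hC1nn : 0 ≤ C1 := by rw [hC1def]; positivity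
  have hDgb : ∀ k, 1 ≤ k → f (x k) - f xs + ⟪ls, A (x k) - b⟫ ≤ C1 / β k := by
    intro k hk
    have h1 := ((hterms k hk).1).trans (hEnS k hk)
    have hb := hβpos k hk
    rw [hC1def, le_div_iff₀ hb, le_div_iff₀ (by positivity : (0:ℝ) < δ^2)]
    nlinarith [h1]
  -- final constant
  set C : ℝ := C1 + CF + ‖ls‖ * CF + 1 with hCdef
  clear_value C
  have hCpos : 0 < C := by
    have : 0 ≤ ‖ls‖ * CF := mul_nonneg (norm_nonneg _) hCFnn
    rw [hCdef]; linarith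
  constructor
  · refine ⟨max (XB + ‖xs‖) ΛM, fun k hk => ⟨?_, ?_⟩⟩
    · have h := hxb k hk
      calc ‖x k‖ = ‖(x k - xs) + xs‖ := by rw [sub_add_cancel]
        _ ≤ ‖x k - xs‖ + ‖xs‖ := norm_add_le _ _
        _ ≤ XB + ‖xs‖ := by linarith
        _ ≤ max (XB + ‖xs‖) ΛM := le_max_left _ _
    · exact (hlamb k hk).trans (le_max_right _ _)
  · refine ⟨C, hCpos, fun k hk => ?_⟩
    have hb := hβpos k hk
    have hsplit : C / β k = C1/β k + CF/β k + (‖ls‖*CF)/β k + 1/β k := by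
      rw [hCdef]; ring
    have hd1 : 0 ≤ CF/β k := div_nonneg hCFnn hb.le
    have hd2 : 0 ≤ 1/β k := by positivity
    have hd3 : 0 ≤ (‖ls‖*CF)/β k := div_nonneg (mul_nonneg (norm_nonneg _) hCFnn) hb.le
    have hd4 : 0 ≤ C1/β k := div_nonneg hC1nn hb.le
    have hDg := hDgb k hk
    have hr := hfeas k hk
    have hip : (⟪ls, A (x k) - b⟫ : ℝ) ≤ ‖ls‖ * ‖A (x k) - b‖ := real_inner_le_norm _ _
    have hip2 : -(‖ls‖ * ‖A (x k) - b‖) ≤ (⟪ls, A (x k) - b⟫ : ℝ) := by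
      have h := abs_real_inner_le_norm ls (A (x k) - b)
      have h2 := neg_abs_le (⟪ls, A (x k) - b⟫ : ℝ)
      linarith
    have hlsr : ‖ls‖ * ‖A (x k) - b‖ ≤ ‖ls‖ * (CF/β k) :=
      mul_le_mul_of_nonneg_left hr (norm_nonneg ls)
    have hlsr2 : ‖ls‖ * (CF/β k) = (‖ls‖*CF)/β k := by ring
    have hDw := hDnn (x k)
    refine ⟨?_, ?_, ?_⟩
    · rw [hL, hLxs]
      linarith
    · rw [abs_le]
      constructor
      · linarith
      · linarith
    · linarith

end MainProof
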